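/- There is no finite sequence of mutations taking the 3×3 matrix with rows (0, 2, 0), (-2, 0, 1), (0, -1, 0) to the matrix with rows (0, -2, 1), (2, 0, 0), (-1, 0, 0). -/

import Mathlib

def mutB (B : Matrix (Fin 3) (Fin 3) ℤ) (k : Fin 3) : Matrix (Fin 3) (Fin 3) ℤ :=
  fun i j => if i = k ∨ j = k then -B i j
    else B i j + Int.sign (B i k) * max 0 (B i k * B k j)

def B₀ : Matrix (Fin 3) (Fin 3) ℤ := !![0, 2, 0; -2, 0, 1; 0, -1, 0]

/-- If `a` is even, the exchange term `sign a * max 0 (a*b)` is even. -/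
lemma term_even (a b : ℤ) (ha : a % 2 = 0) :
    (Int.sign a * max 0 (a * b)) % 2 = 0 := by
  rcases le_or_gt (a * b) 0 with h | h
  · simp [max_eq_left h]
  · rw [max_eq_right h.le, Int.mul_emod, Int.mul_emod a b, ha]
    simp

def P (B : Matrix (Fin 3) (Fin 3) ℤ) : Prop :=
  B 0 1 % 2 = 0 ∧ B 0 2 % 2 = 0

lemma even_add_term (x a b : ℤ) (hx : x % 2 = 0) (ha : a % 2 = 0) :
    2 ∣ (x + Int.sign a * max 0 (a * b)) := by
  have h := term_even a b ha
  omega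

lemma P_mut (B : Matrix (Fin 3) (Fin 3) ℤ) (k : Fin 3) (h : P B) : P (mutB B k) := by
  obtain ⟨h1, h2⟩ := h
  fin_cases k <;> constructor <;>
    norm_num [mutB, P, Fin.ext_iff] <;>
    first
      | omega
      | exact even_add_term _ _ _ h2 h1
      | exact even_add_term _ _ _ h1 h2

theorem no_mut_seq_to_target :
    ¬ ∃ l : List (Fin 3),
      l.foldl mutB B₀ = !![0, -2, 1; 2, 0, 0; -1, 0, 0] := by
  rintro ⟨l, hl⟩
  have key : ∀ (l : List (Fin 3)) (B : Matrix (Fin 3) (Fin 3) ℤ), P B → P (l.foldl mutB B) := by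
    intro l
    induction l with
    | nil => intro B h; exact h
    | cons k t ih => intro B h; exact ih _ (P_mut B k h)
  have h0 : P B₀ := by constructor <;> norm_num [B₀] <;> decide
  have := key l B₀ h0
  rw [hl] at this
  obtain ⟨-, h2⟩ := this
  norm_num at h2
  revert h2; decide
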